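/- Let d ≥ 1, T > 0, δ ∈ ℝ, Σ ∈ M_d(ℝ), ϑ ∈ M_d(ℝ), and let H : [0, T] → M_d(ℝ) be continuous. Let Ψ, V : [0, T] → M_d(ℝ) be differentiable with Ψ′(t) = −H(t)ᵀ Ψ(t), V′(t) = −Ψ(t)ᵀ Σᵀ Σ Ψ(t) for all t ∈ [0, T], Ψ(T) = I_d, and V(T) = 0. Suppose that det(I_d + 2ϑV(t)) > 0 for every t ∈ [0, T], and set ψ̂(t) = Ψ(t) ϑ (I_d + 2V(t)ϑ)^{−1} Ψ(t)ᵀ. Then the function φ̂(t) = (δ/2) log det(I_d + 2ϑV(t)) satisfies φ̂(T) = 0 and, for every t ∈ [0, T], φ̂ is differentiable at t with φ̂′(t) = −δ tr(ψ̂(t) Σᵀ Σ). -/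

import Mathlib

open Matrix

lemma det_col_aux {d : ℕ} (M B : Matrix (Fin d) (Fin d) ℝ) (i : Fin d) :
    ∑ σ : Equiv.Perm (Fin d), (Equiv.Perm.sign σ : ℝ) *
      ((∏ j ∈ Finset.univ.erase i, M (σ j) j) * B (σ i) i) =
    (M.updateCol i (fun k => B k i)).det := by
  rw [Matrix.det_apply']
  refine Finset.sum_congr rfl fun σ _ => ?_
  congr 1
  rw [← Finset.prod_erase_mul _ _ (Finset.mem_univ i)]
  congr 1
  · exact Finset.prod_congr rfl fun j hj => by
      rw [Matrix.updateCol_apply, if_neg (Finset.ne_of_mem_erase hj)]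
  · rw [Matrix.updateCol_apply, if_pos rfl]

lemma hasDerivAt_det {d : ℕ} {A : ℝ → Matrix (Fin d) (Fin d) ℝ}
    {B : Matrix (Fin d) (Fin d) ℝ} {t : ℝ}
    (h : ∀ i j, HasDerivAt (fun s => A s i j) (B i j) t) :
    HasDerivAt (fun s => (A s).det) ((Matrix.adjugate (A t) * B).trace) t := by
  have h1 : HasDerivAt
      (fun s => ∑ σ : Equiv.Perm (Fin d), (Equiv.Perm.sign σ : ℝ) * ∏ i, A s (σ i) i)
      (∑ σ : Equiv.Perm (Fin d), (Equiv.Perm.sign σ : ℝ) *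
        ∑ i, (∏ j ∈ Finset.univ.erase i, A t (σ j) j) • B (σ i) i) t := by
    refine HasDerivAt.fun_sum fun σ _ => ?_
    exact (HasDerivAt.fun_finsetProd fun i _ => h (σ i) i).const_mul _
  have hfun : (fun s => (A s).det) =
      fun s => ∑ σ : Equiv.Perm (Fin d), (Equiv.Perm.sign σ : ℝ) * ∏ i, A s (σ i) i := by
    funext s; rw [Matrix.det_apply']
  rw [hfun]
  convert h1 using 1
  simp only [smul_eq_mul, Finset.mul_sum]
  rw [Finset.sum_comm]
  rw [Matrix.trace]
  refine Finset.sum_congr rfl fun i _ => ?_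
  rw [det_col_aux (A t) B i, ← Matrix.cramer_apply, Matrix.cramer_eq_adjugate_mulVec]
  simp [Matrix.diag, Matrix.mulVec, Matrix.mul_apply, dotProduct]

theorem wishart_logdet_solution (d : ℕ) (hd : 1 ≤ d) (T : ℝ) (hT : 0 < T)
    (δ : ℝ) (S ϑ : Matrix (Fin d) (Fin d) ℝ)
    (H : ℝ → Matrix (Fin d) (Fin d) ℝ)
    (hH : ∀ i j : Fin d, ContinuousOn (fun t : ℝ => H t i j) (Set.Icc 0 T))
    (Ψ V : ℝ → Matrix (Fin d) (Fin d) ℝ)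
    (hΨ' : ∀ t ∈ Set.Icc (0 : ℝ) T, ∀ i j : Fin d,
      HasDerivAt (fun s : ℝ => Ψ s i j) ((-((H t)ᵀ * Ψ t)) i j) t)
    (hV' : ∀ t ∈ Set.Icc (0 : ℝ) T, ∀ i j : Fin d,
      HasDerivAt (fun s : ℝ => V s i j) ((-((Ψ t)ᵀ * Sᵀ * S * Ψ t)) i j) t)
    (hΨT : Ψ T = 1) (hVT : V T = 0)
    (hdet : ∀ t ∈ Set.Icc (0 : ℝ) T, 0 < (1 + (2 : ℝ) • (ϑ * V t)).det)
    (ψh : ℝ → Matrix (Fin d) (Fin d) ℝ)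
    (hψh : ∀ t : ℝ, ψh t = Ψ t * ϑ * (1 + (2 : ℝ) • (V t * ϑ))⁻¹ * (Ψ t)ᵀ)
    (φh : ℝ → ℝ)
    (hφh : ∀ t : ℝ, φh t = δ / 2 * Real.log (1 + (2 : ℝ) • (ϑ * V t)).det) :
    φh T = 0 ∧
      ∀ t ∈ Set.Icc (0 : ℝ) T,
        HasDerivAt φh (-δ * Matrix.trace (ψh t * Sᵀ * S)) t := by
  have hφfun : φh = fun t => δ / 2 * Real.log (1 + (2 : ℝ) • (ϑ * V t)).det :=
    funext hφh
  constructor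
  · rw [hφh T, hVT]; simp
  intro t ht
  set A : Matrix (Fin d) (Fin d) ℝ := 1 + (2 : ℝ) • (ϑ * V t) with hA
  set C : Matrix (Fin d) (Fin d) ℝ := 1 + (2 : ℝ) • (V t * ϑ) with hC
  have hdA : 0 < A.det := hdet t ht
  have hdetC : C.det = A.det := by
    have h := Matrix.det_one_add_mul_comm ((2 : ℝ) • V t) ϑ
    rw [hC, hA]
    simpa [smul_mul_assoc, mul_smul_comm] using h
  have hdC : 0 < C.det := by rw [hdetC]; exact hdA
  have hAu : IsUnit A.det := isUnit_iff_ne_zero.mpr hdA.ne'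
  have hCu : IsUnit C.det := isUnit_iff_ne_zero.mpr hdC.ne'
  have hcomm : A⁻¹ * ϑ = ϑ * C⁻¹ := by
    have h1 : ϑ * C = A * ϑ := by
      rw [hA, hC]
      simp only [mul_add, add_mul, mul_one, one_mul, mul_smul_comm, smul_mul_assoc, mul_assoc]
    calc A⁻¹ * ϑ = A⁻¹ * (ϑ * C) * C⁻¹ := by
          rw [mul_assoc A⁻¹ (ϑ * C) C⁻¹, mul_assoc ϑ C C⁻¹,
            Matrix.mul_nonsing_inv C hCu, mul_one]
      _ = ϑ * C⁻¹ := by rw [h1, ← mul_assoc, Matrix.nonsing_inv_mul A hAu, one_mul]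
  set B : Matrix (Fin d) (Fin d) ℝ := (2 : ℝ) • (ϑ * -((Ψ t)ᵀ * Sᵀ * S * Ψ t)) with hB
  have hAder : ∀ i j, HasDerivAt (fun s : ℝ => (1 + (2 : ℝ) • (ϑ * V s)) i j) (B i j) t := by
    intro i j
    have heq : ∀ s : ℝ, (1 + (2 : ℝ) • (ϑ * V s)) i j
        = (1 : Matrix (Fin d) (Fin d) ℝ) i j + 2 * ∑ k, ϑ i k * V s k j := by
      intro s
      simp [Matrix.add_apply, Matrix.smul_apply, Matrix.mul_apply]
    simp only [heq]
    have hsum : HasDerivAt (fun s : ℝ => ∑ k, ϑ i k * V s k j)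
        (∑ k, ϑ i k * (-((Ψ t)ᵀ * Sᵀ * S * Ψ t)) k j) t :=
      HasDerivAt.fun_sum fun k _ => (hV' t ht k j).const_mul _
    have h2 := (hsum.const_mul (2 : ℝ)).const_add ((1 : Matrix (Fin d) (Fin d) ℝ) i j)
    exact h2.congr_deriv rfl
  have hdetder : HasDerivAt (fun s : ℝ => (1 + (2 : ℝ) • (ϑ * V s)).det)
      ((Matrix.adjugate A * B).trace) t := hasDerivAt_det hAder
  have hlog := (hdetder.log hdA.ne').const_mul (δ / 2)
  rw [hφfun]
  refine hlog.congr_deriv ?_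
  have hadj : Matrix.adjugate A = A.det • A⁻¹ := by
    rw [Matrix.nonsing_inv_apply A hAu, smul_smul, IsUnit.mul_val_inv, one_smul]
  rw [hadj, Matrix.smul_mul, Matrix.trace_smul, hψh t]
  have e1 : A⁻¹ * B = (-2 : ℝ) • (A⁻¹ * ϑ * ((Ψ t)ᵀ * Sᵀ * S * Ψ t)) := by
    rw [hB, Matrix.mul_smul, Matrix.mul_neg, mul_neg, smul_neg, ← neg_smul, ← mul_assoc]
  rw [hcomm] at e1
  rw [e1, Matrix.trace_smul]
  have key : (ϑ * C⁻¹ * ((Ψ t)ᵀ * Sᵀ * S * Ψ t)).trace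
      = (Ψ t * ϑ * C⁻¹ * (Ψ t)ᵀ * Sᵀ * S).trace := by
    rw [show Ψ t * ϑ * C⁻¹ * (Ψ t)ᵀ * Sᵀ * S
        = Ψ t * (ϑ * C⁻¹ * (Ψ t)ᵀ * Sᵀ * S) by simp [mul_assoc],
      Matrix.trace_mul_comm (Ψ t) (ϑ * C⁻¹ * (Ψ t)ᵀ * Sᵀ * S)]
    simp [mul_assoc]
  rw [key]
  rw [← hA, ← hC]
  field_simp
  ring
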